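/- Let p : X ⟶ Y be a morphism of sheaves of types on a site (C, J) whose underlying morphism of presheaves is J-locally surjective, and let N(p) be its Čech nerve, the simplicial object with N(p)_n = X ×_Y ⋯ ×_Y X (n+1 factors). Then the colimit in the category of J-sheaves of the simplicial object N(p) is Y, via the augmentation induced by p. -/

import Mathlib

open CategoryTheory CategoryTheory.Limits

/-- The augmentation of an augmented simplicial object, viewed as a cocone on the
underlying simplicial object. -/
def augmentationCocone {C : Type u} [Category.{v} C]
    (A : SimplicialObject.Augmented C) : Cocone A.left where
  pt := A.right
  ι := A.hom

namespace CechColimAux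

open Opposite

universe u'

variable {C : Type u'} [SmallCategory C] {J : GrothendieckTopology C}
variable {X Y : Sheaf J (Type u')} (p : X ⟶ Y)

lemma widePullback_lift_elem (n : ℕ) (U : Cᵒᵖ)
    (x : Fin n → X.val.obj U) (y : Y.val.obj U) (hx : ∀ i, p.hom.app U (x i) = y) :
    ∃ z : (widePullback Y (fun _ : Fin n => X) (fun _ => p)).val.obj U,
      ∀ i, (WidePullback.π (fun _ : Fin n => p) i).hom.app U z = x i := by
  set G := sheafToPresheaf J (Type u') ⋙ (evaluation Cᵒᵖ (Type u')).obj U with hG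
  set D := WidePullbackShape.wideCospan Y (fun _ : Fin n => X) (fun _ => p) with hD
  have hL : IsLimit (G.mapCone (limit.cone D)) := isLimitOfPreserves G (limit.isLimit D)
  let c : Cone (D ⋙ G) :=
    { pt := PUnit
      π :=
        { app := fun j => TypeCat.ofHom (fun _ => Option.rec (motive := fun j => (D ⋙ G).obj j) y x j)
          naturality := by
            intro j j' f
            change WidePullbackShape.Hom j j' at f
            cases f with
            | id => rfl
            | term i => ext u; exact (hx i).symm } }
  refine ⟨hL.lift c PUnit.unit, fun i => ?_⟩
  exact ConcreteCategory.congr_hom (hL.fac c (Option.some i)) PUnit.unit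

/-- The canonical map `X ⟶ (cechNerve)₀`, inverse to the projection. -/
noncomputable def cechZeroLift : X ⟶ (Arrow.mk p).cechNerve.obj (op (SimplexCategory.mk 0)) :=
  WidePullback.lift p (fun _ => 𝟙 _) (by simp)

lemma cechZeroLift_base : cechZeroLift p ≫ WidePullback.base _ = p :=
  WidePullback.lift_base _ _ _ _

lemma pi_comp_cechZeroLift (n : SimplexCategory) (i : Fin (n.len + 1)) :
    (Arrow.mk p).cechNerve.map (SimplexCategory.const (SimplexCategory.mk 0) n i).op
      = WidePullback.π (fun _ => (Arrow.mk p).hom) i ≫ cechZeroLift p := by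
  apply WidePullback.hom_ext
  · intro j
    simp [cechZeroLift, Arrow.cechNerve]
    erw [WidePullback.lift_π, WidePullback.lift_π, Category.comp_id]
  · simp [cechZeroLift, WidePullback.π_arrow, Arrow.cechNerve]
    erw [WidePullback.lift_base, WidePullback.lift_base]
    exact (WidePullback.π_arrow _ _).symm

variable (s : Cocone (Arrow.mk p).cechNerve)

/-- The map `X ⟶ s.pt` induced by a cocone on the Čech nerve. -/
noncomputable def gMap : X ⟶ s.pt :=
  cechZeroLift p ≫ s.ι.app (op (SimplexCategory.mk 0))

lemma pi_gMap (n : SimplexCategory) (i : Fin (n.len + 1)) :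
    WidePullback.π (fun _ => (Arrow.mk p).hom) i ≫ gMap p s = s.ι.app (op n) := by
  rw [gMap, ← Category.assoc, ← pi_comp_cechZeroLift]
  exact s.w (SimplexCategory.const (SimplexCategory.mk 0) n i).op

lemma gMap_const (U : Cᵒᵖ) (x₁ x₂ : X.val.obj U)
    (h : p.hom.app U x₁ = p.hom.app U x₂) :
    (gMap p s).hom.app U x₁ = (gMap p s).hom.app U x₂ := by
  obtain ⟨z, hz⟩ := widePullback_lift_elem p 2 U (fun i => if i = 0 then x₁ else x₂)
    (p.hom.app U x₁) (by
      intro i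
      rcases Fin.exists_fin_two.mp ⟨i, rfl⟩ with rfl | rfl
      · simp
      · simpa using h.symm)
  have h0 : (WidePullback.π (fun _ : Fin 2 => p) 0).hom.app U z = x₁ := by simpa using hz 0
  have h1 : (WidePullback.π (fun _ : Fin 2 => p) 1).hom.app U z = x₂ := by simpa using hz 1
  have e0 := ConcreteCategory.congr_hom (congrArg (fun (m : _ ⟶ s.pt) => m.hom.app U)
    (pi_gMap p s (SimplexCategory.mk 1) 0)) z
  have e1 := ConcreteCategory.congr_hom (congrArg (fun (m : _ ⟶ s.pt) => m.hom.app U)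
    (pi_gMap p s (SimplexCategory.mk 1) 1)) z
  dsimp at e0 e1
  rw [h0] at e0
  rw [h1] at e1
  rw [e0, e1]

variable (hp : Presheaf.IsLocallySurjective J p.hom)

include hp in
lemma exists_desc : ∃ d : Y ⟶ s.pt, p ≫ d = gMap p s := by
  haveI := hp
  have hsheaf : Presieve.IsSheaf J s.pt.val :=
    (isSheaf_iff_isSheaf_of_type J _).1 s.pt.cond
  -- the characteristic property
  let P : ∀ (U : Cᵒᵖ), Y.val.obj U → s.pt.val.obj U → Prop := fun U y t =>
    ∀ (V : C) (f : V ⟶ U.unop) (x : X.val.obj (op V)),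
      p.hom.app (op V) x = Y.val.map f.op y →
        s.pt.val.map f.op t = (gMap p s).hom.app (op V) x
  have uniqT : ∀ (U : Cᵒᵖ) (y : Y.val.obj U) (t₁ t₂ : s.pt.val.obj U),
      P U y t₁ → P U y t₂ → t₁ = t₂ := by
    intro U y t₁ t₂ h₁ h₂
    apply (hsheaf.isSeparated _
      (Presheaf.imageSieve_mem J p.hom y)).ext
    rintro V f ⟨x, hx⟩
    rw [h₁ V f x hx, h₂ V f x hx]
  have exT : ∀ (U : Cᵒᵖ) (y : Y.val.obj U), ∃ t, P U y t := by
    intro U y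
    have hS := Presheaf.imageSieve_mem J p.hom y
    have compat :
        ((Presieve.FamilyOfElements.localPreimage p.hom y).map (gMap p s).hom).Compatible := by
      intro V₁ V₂ W g₁ g₂ f₁ f₂ h₁ h₂ hcomm
      dsimp [Presieve.FamilyOfElements.map, Presieve.FamilyOfElements.localPreimage]
      rw [← FunctorToTypes.naturality, ← FunctorToTypes.naturality]
      apply gMap_const
      have w₁ : p.hom.app (op V₁) (Presheaf.localPreimage p.hom y f₁ h₁)
          = Y.val.map f₁.op y := h₁.choose_spec
      have w₂ : p.hom.app (op V₂) (Presheaf.localPreimage p.hom y f₂ h₂)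
          = Y.val.map f₂.op y := h₂.choose_spec
      rw [FunctorToTypes.naturality p.hom,
        FunctorToTypes.naturality p.hom, w₁, w₂,
        ← FunctorToTypes.map_comp_apply, ← FunctorToTypes.map_comp_apply,
        ← op_comp, ← op_comp, hcomm]
    refine ⟨(hsheaf _ hS).amalgamate _ compat, ?_⟩
    intro V f x hx
    have hf : Presheaf.imageSieve p.hom y f := ⟨x, hx⟩
    rw [(hsheaf _ hS).valid_glue compat f hf]
    dsimp [Presieve.FamilyOfElements.map, Presieve.FamilyOfElements.localPreimage]
    apply gMap_const
    have w : p.hom.app (op V) (Presheaf.localPreimage p.hom y f hf)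
        = Y.val.map f.op y := hf.choose_spec
    rw [w, hx]
  choose d hd using exT
  refine ⟨⟨{ app := fun U => TypeCat.ofHom (d U), naturality := ?_ }⟩, ?_⟩
  · intro U U' h
    ext y
    refine uniqT U' (Y.val.map h y) _ _ (hd U' (Y.val.map h y)) ?_
    intro V f x hx
    have hcomp : (h ≫ f.op) = (f ≫ h.unop).op := rfl
    show s.pt.val.map f.op (s.pt.val.map h (d U y)) = _
    rw [← FunctorToTypes.map_comp_apply, hcomp]
    refine hd U y V (f ≫ h.unop) x ?_
    rw [hx, ← FunctorToTypes.map_comp_apply, hcomp]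
  · apply Sheaf.hom_ext
    ext U x
    show d U (p.hom.app U x) = (gMap p s).hom.app U x
    have h2 : P U (p.hom.app U x) ((gMap p s).hom.app U x) := by
      intro V f x' hx'
      rw [← FunctorToTypes.naturality]
      apply gMap_const
      rw [FunctorToTypes.naturality p.hom, hx']
    have h1 := hd U (p.hom.app U x)
    exact uniqT U (p.hom.app U x) _ _ h1 h2

end CechColimAux

open Opposite CechColimAux

/-- If `p : X ⟶ Y` is a locally surjective morphism of sheaves of types on a site
`(C, J)`, then the colimit (in sheaves) of the Čech nerve of `p` is `Y`, via the
augmentation. -/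
theorem cechNerve_colimit_of_locallySurjective {C : Type u} [SmallCategory C]
    (J : GrothendieckTopology C) {X Y : Sheaf J (Type u)} (p : X ⟶ Y)
    (hp : Presheaf.IsLocallySurjective J p.hom) :
    Nonempty (IsColimit (augmentationCocone (Arrow.mk p).augmentedCechNerve)) := by
  haveI := hp
  haveI : Epi p := Sheaf.epi_of_isLocallySurjective' (φ := p)
  refine ⟨{ desc := fun s => (exists_desc p s hp).choose
            fac := ?_
            uniq := ?_ }⟩
  · intro s j
    obtain ⟨n⟩ := j
    have hdg := (exists_desc p s hp).choose_spec
    show WidePullback.base _ ≫ _ = s.ι.app (op n)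
    rw [← WidePullback.π_arrow (fun _ => (Arrow.mk p).hom) 0, Category.assoc]
    rw [show (Arrow.mk p).hom ≫ (exists_desc p s hp).choose = gMap p s from hdg]
    exact pi_gMap p s n 0
  · intro s m hm
    have hdg := (exists_desc p s hp).choose_spec
    refine (cancel_epi p).1 ?_
    rw [hdg]
    have h0 : (WidePullback.base _ :
        (Arrow.mk p).cechNerve.obj (op (SimplexCategory.mk 0)) ⟶ Y) ≫ m
        = s.ι.app (op (SimplexCategory.mk 0)) := hm (op (SimplexCategory.mk 0))
    calc p ≫ m = cechZeroLift p ≫ WidePullback.base _ ≫ m := by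
          erw [← Category.assoc, cechZeroLift_base]
      _ = cechZeroLift p ≫ s.ι.app (op (SimplexCategory.mk 0)) := by rw [h0]
      _ = gMap p s := rfl
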